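/- Dynamics-invariance of the exhaustible-resource problem under the scaling family: Let x : [0,T] → ℝ and u₂ : [0,T] → ℝ be such that ẋ(t) = −u₂(t) for all t ∈ [0,T]. Then for all real s and all t ∈ [0,T], (d/dt)[e^{(1−βγ)s}·x(t)] = φ(e^{(αγ+1)s}·u₂(t)) · e^{−γ(α+β)s}, where φ(u₂) = −u₂; i.e. the transformed trajectory X(x(t),s) = e^{(1−βγ)s}·x(t) satisfies (d/dt) X(x(t),s) = φ(U₂(u₂(t),s)) · (d/dt) T(t,s). -/

import Mathlib

open Set Real

/-- **Dynamics-invariance of the exhaustible-resource problem under the scaling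
family**: if `ẋ(t) = −u₂(t)` on `[0,T]`, then the transformed trajectory
`X(x(t),s) = e^{(1−βγ)s}·x(t)` satisfies
`(d/dt)X(x(t),s) = φ(U₂(u₂(t),s)) · (d/dt)T(t,s)`, where `φ(u₂) = −u₂`,
`U₂(u₂,s) = e^{(αγ+1)s}·u₂` and `(d/dt)T(t,s) = e^{−γ(α+β)s}`. -/
theorem exhaustible_resource_dynamics_invariance
    (α β γ : ℝ) (hγ : γ < 1) (hα : 0 < α) (hβ : 0 < β) (hαβ : α + β < 1)
    (T : ℝ) (x u₂ : ℝ → ℝ)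
    (hx : ∀ t ∈ Icc 0 T, HasDerivAt x (-(u₂ t)) t) :
    ∀ s : ℝ, ∀ t ∈ Icc 0 T,
      HasDerivAt (fun τ => Real.exp ((1 - β * γ) * s) * x τ)
        ((-(Real.exp ((α * γ + 1) * s) * u₂ t)) *
          deriv (fun τ : ℝ => Real.exp (-(γ * (α + β)) * s) * τ) t) t := by
  intro s t ht
  have hd : deriv (fun τ : ℝ => Real.exp (-(γ * (α + β)) * s) * τ) t
      = Real.exp (-(γ * (α + β)) * s) := by
    simpa using ((hasDerivAt_id t).const_mul (Real.exp (-(γ * (α + β)) * s))).deriv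
  rw [hd]
  have h := (hx t ht).const_mul (Real.exp ((1 - β * γ) * s))
  have he : Real.exp ((α * γ + 1) * s) * Real.exp (-(γ * (α + β)) * s)
      = Real.exp ((1 - β * γ) * s) := by
    rw [← Real.exp_add]; congr 1; ring
  refine h.congr_deriv ?_
  linear_combination (u₂ t) * he
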